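/- Let n = 2^k. Suppose Magnus plays the classical optimal magnitude sequence s_k of length n−1 and Derek plays any sequence of unitaries D_i ∈ SU(2) on the direction register (no position control). Then for every position x ∈ Z/nZ there exists a step t ≤ n−1 and a computational-basis component of the joint state at step t with nonzero amplitude whose position register equals x. In other words, every position is attained. -/

import Mathlib

open scoped BigOperators

/-- The doubling magnitude sequence for the Magnus-Derek game on `2^k` nodes. -/
def magSeq (k : ℕ) : ℕ → List ℕ
  | 0 => []
  | 1 => [2 ^ (k - 1)]
  | j + 2 => magSeq k (j + 1) ++ [2 ^ (k - 1 - (j + 1))] ++ magSeq k (j + 1)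

/-- The joint state (direction register ⊗ position register) of the walk with
classical magnitudes `s` where Derek applies the unitary `D t` to his direction
register at step `t`, followed by the conditional shift by `± s t`. -/
noncomputable def derekWalk (n : ℕ) (s : ℕ → ZMod n)
    (D : ℕ → Matrix (Fin 2) (Fin 2) ℂ) : ℕ → Fin 2 × ZMod n → ℂ
  | 0 => fun p => if p = (0, 0) then 1 else 0
  | t + 1 => fun p => ∑ d : Fin 2,
      D t p.1 d * derekWalk n s D t (d, p.2 - (if p.1 = 0 then s t else - s t))

/-! ### Auxiliary machinery -/

noncomputable def stepW (n : ℕ) (s : ZMod n) (U : Matrix (Fin 2) (Fin 2) ℂ)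
    (ψ : Fin 2 × ZMod n → ℂ) : Fin 2 × ZMod n → ℂ :=
  fun p => ∑ d : Fin 2, U p.1 d * ψ (d, p.2 - (if p.1 = 0 then s else -s))

noncomputable def walkW (n : ℕ) (s : ℕ → ZMod n) (D : ℕ → Matrix (Fin 2) (Fin 2) ℂ)
    (ψ : Fin 2 × ZMod n → ℂ) : ℕ → Fin 2 × ZMod n → ℂ
  | 0 => ψ
  | t + 1 => stepW n (s t) (D t) (walkW n s D ψ t)

lemma derekWalk_eq (n : ℕ) (s : ℕ → ZMod n) (D : ℕ → Matrix (Fin 2) (Fin 2) ℂ) (t : ℕ) :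
    derekWalk n s D t =
      walkW n s D (fun p => if p = (0, 0) then 1 else 0) t := by
  induction t with
  | zero => rfl
  | succ t ih => funext p; simp [derekWalk, walkW, stepW, ih]

def liftC (M c : ℕ) (y : ZMod M) : ZMod (2 * M) := ((2 * y.val + c : ℕ) : ZMod (2 * M))

def dblC (M : ℕ) (σ : ZMod M) : ZMod (2 * M) := ((2 * σ.val : ℕ) : ZMod (2 * M))

def projC (M c : ℕ) (φ : Fin 2 × ZMod (2 * M) → ℂ) : Fin 2 × ZMod M → ℂ :=
  fun p => φ (p.1, liftC M c p.2)

lemma natCast_eq_of_modEq {m a b : ℕ} (h : a ≡ b [MOD m]) : ((a : ZMod m) = (b : ZMod m)) :=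
  (ZMod.natCast_eq_natCast_iff _ _ _).mpr h

lemma val_add_modEq {M : ℕ} [NeZero M] (y σ : ZMod M) :
    (y + σ).val ≡ y.val + σ.val [MOD M] := by
  rw [ZMod.val_add]; exact Nat.mod_modEq _ _

lemma val_sub_modEq {M : ℕ} [NeZero M] (y σ : ZMod M) :
    (y - σ).val + σ.val ≡ y.val [MOD M] := by
  have := (val_add_modEq (y - σ) σ).symm
  simpa using this

lemma lift_sub {M : ℕ} [NeZero M] (c : ℕ) (y σ : ZMod M) :
    liftC M c (y - σ) = liftC M c y - dblC M σ := by
  rw [eq_sub_iff_add_eq]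
  unfold liftC dblC
  rw [← Nat.cast_add]
  apply natCast_eq_of_modEq
  have h := ((val_sub_modEq y σ).mul_left' 2).add_right c
  calc 2 * (y - σ).val + c + 2 * σ.val
      = 2 * ((y - σ).val + σ.val) + c := by ring
    _ ≡ 2 * y.val + c [MOD 2 * M] := h

lemma lift_add {M : ℕ} [NeZero M] (c : ℕ) (y σ : ZMod M) :
    liftC M c (y + σ) = liftC M c y + dblC M σ := by
  have := lift_sub c (y + σ) σ
  simp only [add_sub_cancel_right] at this
  rw [this]; ring

lemma dbl_natCast {M : ℕ} [NeZero M] (a : ℕ) :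
    ((2 * a : ℕ) : ZMod (2 * M)) = dblC M ((a : ZMod M)) := by
  unfold dblC
  apply natCast_eq_of_modEq
  have : (a : ZMod M).val ≡ a [MOD M] := by
    rw [ZMod.val_natCast]; exact Nat.mod_modEq _ _
  exact (this.mul_left' 2).symm

lemma lift_decomp {M : ℕ} [NeZero M] (z : ZMod (2 * M)) :
    liftC M (z.val % 2) ((z.val / 2 : ℕ) : ZMod M) = z := by
  unfold liftC
  have hlt : z.val < 2 * M := z.val_lt
  have h2 : z.val / 2 < M := by omega
  rw [ZMod.val_natCast, Nat.mod_eq_of_lt h2]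
  have : 2 * (z.val / 2) + z.val % 2 = z.val := by omega
  rw [this]
  exact ZMod.natCast_rightInverse z


lemma val_add_one_modEq {M : ℕ} [NeZero M] (w : ZMod M) :
    (w + 1).val ≡ w.val + 1 [MOD M] := by
  have h := val_add_modEq w 1
  have h1 : (1 : ZMod M).val = 1 % M := by rw [← Nat.cast_one, ZMod.val_natCast]
  calc (w + 1).val ≡ w.val + (1 : ZMod M).val [MOD M] := h
    _ = w.val + 1 % M := by rw [h1]
    _ ≡ w.val + 1 [MOD M] := (Nat.mod_modEq 1 M).add_left _

lemma lift_succ0 {M : ℕ} [NeZero M] (w : ZMod M) :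
    liftC M 0 w + 1 = liftC M 1 w := by
  unfold liftC
  have : (2 * w.val + 1 : ℕ) = (2 * w.val + 0) + 1 := by ring
  rw [this]
  push_cast
  ring

lemma lift_succ1 {M : ℕ} [NeZero M] (w : ZMod M) :
    liftC M 1 w + 1 = liftC M 0 (w + 1) := by
  unfold liftC
  have e1 : ((2 * w.val + 1 : ℕ) : ZMod (2 * M)) + 1 = ((2 * w.val + 1 + 1 : ℕ) : ZMod (2 * M)) := by
    push_cast; ring
  rw [e1]
  apply natCast_eq_of_modEq
  have := (val_add_one_modEq w).mul_left' 2
  calc 2 * w.val + 1 + 1 = 2 * (w.val + 1) + 0 := by ring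
    _ ≡ 2 * (w + 1).val + 0 [MOD 2 * M] := (this.symm).add_right 0

lemma lift_pred1 {M : ℕ} [NeZero M] (w : ZMod M) :
    liftC M 1 w - 1 = liftC M 0 w := by
  rw [← lift_succ0, add_sub_cancel_right]

lemma lift_pred0 {M : ℕ} [NeZero M] (w : ZMod M) :
    liftC M 0 w - 1 = liftC M 1 (w - 1) := by
  rw [eq_comm, eq_sub_iff_add_eq, lift_succ1, sub_add_cancel]

lemma step_projC {M : ℕ} [NeZero M] (c : ℕ) (σ : ZMod M) (U : Matrix (Fin 2) (Fin 2) ℂ)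
    (φ : Fin 2 × ZMod (2 * M) → ℂ) :
    projC M c (stepW (2 * M) (dblC M σ) U φ) = stepW M σ U (projC M c φ) := by
  funext p
  obtain ⟨d, y⟩ := p
  simp only [projC, stepW]
  apply Finset.sum_congr rfl
  intro d' _
  congr 2
  by_cases hd : d = 0 <;>
    simp [hd, lift_sub, lift_add, sub_neg_eq_add]

lemma walk_projC {M : ℕ} [NeZero M] (c : ℕ) (s : ℕ → ZMod (2 * M)) (σ : ℕ → ZMod M)
    (D : ℕ → Matrix (Fin 2) (Fin 2) ℂ) (φ : Fin 2 × ZMod (2 * M) → ℂ) :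
    ∀ t, (∀ i, i < t → s i = dblC M (σ i)) →
      projC M c (walkW (2 * M) s D φ t) = walkW M σ D (projC M c φ) t := by
  intro t
  induction t with
  | zero => intro _; rfl
  | succ t ih =>
    intro hs
    have h1 : walkW (2 * M) s D φ (t + 1) = stepW (2 * M) (s t) (D t) (walkW (2 * M) s D φ t) := rfl
    rw [h1, hs t (Nat.lt_succ_self t), step_projC, ih (fun i hi => hs i (hi.trans (Nat.lt_succ_self t)))]
    rfl

lemma stepW_zero (n : ℕ) (s : ZMod n) (U : Matrix (Fin 2) (Fin 2) ℂ) :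
    stepW n s U 0 = 0 := by
  funext p; simp [stepW]

lemma walkW_zero (n : ℕ) (s : ℕ → ZMod n) (D : ℕ → Matrix (Fin 2) (Fin 2) ℂ) (t : ℕ) :
    walkW n s D 0 t = 0 := by
  induction t with
  | zero => rfl
  | succ t ih => show stepW n (s t) (D t) (walkW n s D 0 t) = 0; rw [ih, stepW_zero]

lemma rows_ne_zero (U : Matrix (Fin 2) (Fin 2) ℂ) (hU : U ∈ Matrix.unitaryGroup (Fin 2) ℂ)
    (v : Fin 2 → ℂ) (hv : v ≠ 0) : ∃ r, (∑ d : Fin 2, U r d * v d) ≠ 0 := by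
  by_contra h
  push_neg at h
  apply hv
  have h1 : U.mulVec v = 0 := by
    funext r
    simpa [Matrix.mulVec, dotProduct] using h r
  have h2 : (star U * U) = 1 := (Unitary.mem_iff.mp hU).1
  calc v = (1 : Matrix (Fin 2) (Fin 2) ℂ).mulVec v := (Matrix.one_mulVec v).symm
    _ = (star U).mulVec (U.mulVec v) := by rw [Matrix.mulVec_mulVec, h2]
    _ = 0 := by rw [h1, Matrix.mulVec_zero]

lemma stepW_ne_zero (n : ℕ) (s : ZMod n) (U : Matrix (Fin 2) (Fin 2) ℂ)
    (hU : U ∈ Matrix.unitaryGroup (Fin 2) ℂ) (φ : Fin 2 × ZMod n → ℂ) (hφ : φ ≠ 0) :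
    stepW n s U φ ≠ 0 := by
  obtain ⟨p, hp⟩ := Function.ne_iff.mp hφ
  have hv : (fun d => φ (d, p.2)) ≠ 0 := by
    intro h
    apply hp
    have := congrFun h p.1
    simpa using this
  obtain ⟨r, hr⟩ := rows_ne_zero U hU _ hv
  intro h
  apply hr
  have := congrFun h (r, p.2 + (if r = 0 then s else -s))
  simpa [stepW, add_sub_cancel_right] using this

lemma walkW_ne_zero (n : ℕ) (s : ℕ → ZMod n) (D : ℕ → Matrix (Fin 2) (Fin 2) ℂ)
    (hD : ∀ t, D t ∈ Matrix.unitaryGroup (Fin 2) ℂ) (ψ : Fin 2 × ZMod n → ℂ) (hψ : ψ ≠ 0)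
    (t : ℕ) : walkW n s D ψ t ≠ 0 := by
  induction t with
  | zero => exact hψ
  | succ t ih => exact stepW_ne_zero n (s t) (D t) (hD t) _ ih

lemma walkW_shift (n : ℕ) (s : ℕ → ZMod n) (D : ℕ → Matrix (Fin 2) (Fin 2) ℂ)
    (ψ : Fin 2 × ZMod n → ℂ) (a : ℕ) :
    ∀ t, walkW n s D ψ (a + t) =
      walkW n (fun i => s (a + i)) (fun i => D (a + i)) (walkW n s D ψ a) t := by
  intro t
  induction t with
  | zero => rfl
  | succ t ih =>
    show stepW n (s (a + t)) (D (a + t)) (walkW n s D ψ (a + t)) = _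
    rw [ih]; rfl

lemma magSeq_length (k : ℕ) : ∀ j, (magSeq k j).length = 2 ^ j - 1
  | 0 => by simp [magSeq]
  | 1 => by simp [magSeq]
  | (j + 2) => by
    have h := magSeq_length k (j + 1)
    have h1 : (1 : ℕ) ≤ 2 ^ (j + 1) := Nat.one_le_two_pow
    simp only [magSeq, List.length_append, List.length_cons, List.length_nil, h]
    ring_nf
    omega

lemma magSeq_halve (k : ℕ) : ∀ j, j ≤ k → magSeq (k + 1) j = (magSeq k j).map (2 * ·)
  | 0, _ => by simp [magSeq]
  | 1, h => by
    simp only [magSeq, List.map_cons, List.map_nil, Nat.add_sub_cancel]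
    congr 1
    have : k - 1 + 1 = k := by omega
    rw [← pow_succ', this]
  | (j + 2), h => by
    have ih := magSeq_halve k (j + 1) (by omega)
    simp only [magSeq, ih, List.map_append, List.map_cons, List.map_nil]
    congr 3
    have h1 : k + 1 - 1 - (j + 1) = (k - 1 - (j + 1)) + 1 := by omega
    rw [h1, pow_succ']

lemma magSeq_top (k : ℕ) :
    magSeq (k + 1) (k + 1) = magSeq (k + 1) k ++ [1] ++ magSeq (k + 1) k := by
  cases k with
  | zero => simp [magSeq]
  | succ j =>
    show magSeq (j + 2) (j + 2) = _
    simp only [magSeq]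
    norm_num

lemma listFirst (k i : ℕ) (hi : i < 2 ^ k - 1) :
    (magSeq (k + 1) (k + 1)).getD i 0 = 2 * (magSeq k k).getD i 0 := by
  rw [magSeq_top]
  have hlen : (magSeq (k + 1) k).length = 2 ^ k - 1 := magSeq_length (k + 1) k
  have hlen2 : (magSeq (k + 1) k ++ [1]).length = 2 ^ k - 1 + 1 := by simp [hlen]
  rw [List.getD_append _ _ _ _ (by rw [hlen2]; omega)]
  rw [List.getD_append _ _ _ _ (by rw [hlen]; omega)]
  rw [magSeq_halve k k le_rfl]
  have hi' : i < (magSeq k k).length := by rw [magSeq_length]; omega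
  rw [List.getD_eq_getElem _ _ (by simpa using hi'), List.getD_eq_getElem _ _ hi',
    List.getElem_map]

lemma listMid (k : ℕ) : (magSeq (k + 1) (k + 1)).getD (2 ^ k - 1) 0 = 1 := by
  rw [magSeq_top]
  have hlen : (magSeq (k + 1) k).length = 2 ^ k - 1 := magSeq_length (k + 1) k
  have hlen2 : (magSeq (k + 1) k ++ [1]).length = 2 ^ k - 1 + 1 := by simp [hlen]
  rw [List.getD_append _ _ _ _ (by rw [hlen2]; omega)]
  rw [List.getD_append_right _ _ _ _ (by rw [hlen])]
  simp [hlen]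

lemma listSecond (k i : ℕ) (hi : i < 2 ^ k - 1) :
    (magSeq (k + 1) (k + 1)).getD (2 ^ k + i) 0 = 2 * (magSeq k k).getD i 0 := by
  rw [magSeq_top]
  have hlen : (magSeq (k + 1) k).length = 2 ^ k - 1 := magSeq_length (k + 1) k
  have hlen2 : (magSeq (k + 1) k ++ [1]).length = 2 ^ k - 1 + 1 := by simp [hlen]
  have h1 : (1:ℕ) ≤ 2 ^ k := Nat.one_le_two_pow
  rw [List.getD_append_right _ _ _ _ (by rw [hlen2]; omega)]
  have h2 : 2 ^ k + i - (2 ^ k - 1 + 1) = i := by omega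
  rw [hlen2, h2, magSeq_halve k k le_rfl]
  have hi' : i < (magSeq k k).length := by rw [magSeq_length]; omega
  rw [List.getD_eq_getElem _ _ (by simpa using hi'), List.getD_eq_getElem _ _ hi',
    List.getElem_map]

def CoverP (k : ℕ) : Prop :=
  ∀ m, m = 2 ^ k → ∀ (s : ℕ → ZMod m),
    (∀ i, i < m - 1 → s i = (((magSeq k k).getD i 0 : ℕ) : ZMod m)) →
    ∀ D : ℕ → Matrix (Fin 2) (Fin 2) ℂ, (∀ t, D t ∈ Matrix.unitaryGroup (Fin 2) ℂ) →
    ∀ ψ : Fin 2 × ZMod m → ℂ, ψ ≠ 0 → ∀ x : ZMod m,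
      ∃ t ≤ m - 1, ∃ d : Fin 2, walkW m s D ψ t (d, x) ≠ 0

lemma halfCover (k : ℕ) (IH : CoverP k) [NeZero (2 ^ k : ℕ)]
    (s : ℕ → ZMod (2 * 2 ^ k))
    (hs : ∀ i, i < 2 ^ k - 1 → s i = ((2 * ((magSeq k k).getD i 0) : ℕ) : ZMod (2 * 2 ^ k)))
    (D : ℕ → Matrix (Fin 2) (Fin 2) ℂ) (hD : ∀ t, D t ∈ Matrix.unitaryGroup (Fin 2) ℂ)
    (φ : Fin 2 × ZMod (2 * 2 ^ k) → ℂ) (c : ℕ) (hφ : projC (2 ^ k) c φ ≠ 0)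
    (y : ZMod (2 ^ k)) :
    ∃ t ≤ 2 ^ k - 1, ∃ d : Fin 2, walkW (2 * 2 ^ k) s D φ t (d, liftC (2 ^ k) c y) ≠ 0 := by
  obtain ⟨t, ht, d, hd⟩ := IH (2 ^ k) rfl
    (fun i => (((magSeq k k).getD i 0 : ℕ) : ZMod (2 ^ k))) (fun i _ => rfl)
    D hD (projC (2 ^ k) c φ) hφ y
  refine ⟨t, ht, d, ?_⟩
  have hcomm := walk_projC c s (fun i => (((magSeq k k).getD i 0 : ℕ) : ZMod (2 ^ k))) D φ t
    (fun i hi => by rw [hs i (by omega)]; exact dbl_natCast _)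
  rw [← hcomm] at hd
  exact hd

lemma coverAll : ∀ k, CoverP k := by
  intro k
  induction k with
  | zero =>
    intro m hm s hs D hD ψ hψ x
    have hm1 : m = 1 := by simpa using hm
    subst hm1
    refine ⟨0, le_refl _, ?_⟩
    obtain ⟨p, hp⟩ := Function.ne_iff.mp hψ
    refine ⟨p.1, ?_⟩
    have hx : x = p.2 := Subsingleton.elim _ _
    rw [hx]
    exact hp
  | succ k IH =>
    intro m hm s hs D hD ψ hψ x
    have hm2 : m = 2 * 2 ^ k := by rw [hm]; ring
    subst hm2
    haveI : NeZero (2 ^ k : ℕ) := ⟨by positivity⟩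
    haveI : NeZero (2 * 2 ^ k : ℕ) := ⟨by positivity⟩
    have h1 : (1:ℕ) ≤ 2 ^ k := Nat.one_le_two_pow
    -- decompose x
    obtain ⟨r, hrlt, y, hx⟩ : ∃ r, r < 2 ∧ ∃ y, liftC (2 ^ k) r y = x :=
      ⟨x.val % 2, Nat.mod_lt _ (by norm_num), _, lift_decomp x⟩
    have hsfirst : ∀ i, i < 2 ^ k - 1 →
        s i = ((2 * ((magSeq k k).getD i 0) : ℕ) : ZMod (2 * 2 ^ k)) := by
      intro i hi
      rw [hs i (by omega), listFirst k i hi]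
    by_cases hA : projC (2 ^ k) r ψ ≠ 0
    · obtain ⟨t, ht, d, hd⟩ := halfCover k IH s hsfirst D hD ψ r hA y
      rw [hx] at hd
      exact ⟨t, by omega, d, hd⟩
    · push_neg at hA
      -- state just before the middle step
      set φ₁ := walkW (2 * 2 ^ k) s D ψ (2 ^ k - 1) with hφ₁
      have hφ₁ne : φ₁ ≠ 0 := walkW_ne_zero _ s D hD ψ hψ _
      have hproj₁ : projC (2 ^ k) r φ₁ = 0 := by
        rw [hφ₁, walk_projC r s (fun i => (((magSeq k k).getD i 0 : ℕ) : ZMod (2 ^ k))) D ψ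
          (2 ^ k - 1) (fun i hi => by
            rw [hsfirst i (by omega)]; exact dbl_natCast _), hA, walkW_zero]
      obtain ⟨p₀, hp₀⟩ := Function.ne_iff.mp hφ₁ne
      obtain ⟨d₀, z₀⟩ := p₀
      simp only [Pi.zero_apply] at hp₀
      -- z₀ lies in the opposite coset
      obtain ⟨c₀, hc₀lt, w₀, hz₀⟩ : ∃ c₀, c₀ < 2 ∧ ∃ w₀, liftC (2 ^ k) c₀ w₀ = z₀ :=
        ⟨z₀.val % 2, Nat.mod_lt _ (by norm_num), _, lift_decomp z₀⟩
      have hc₀r : c₀ ≠ r := by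
        intro hEq
        have : projC (2 ^ k) r φ₁ (d₀, w₀) = 0 := by rw [hproj₁]; rfl
        apply hp₀
        rw [← hz₀, hEq]
        exact this
      -- the middle step
      have hmid : s (2 ^ k - 1) = 1 := by
        rw [hs (2 ^ k - 1) (by omega), listMid]
        norm_num
      have hsucc : (2:ℕ) ^ k = (2 ^ k - 1) + 1 := by omega
      set φ₂ := walkW (2 * 2 ^ k) s D ψ (2 ^ k) with hφ₂
      have hφ₂step : φ₂ = stepW (2 * 2 ^ k) 1 (D (2 ^ k - 1)) φ₁ := by
        have e : walkW (2 * 2 ^ k) s D ψ (2 ^ k)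
            = stepW (2 * 2 ^ k) (s (2 ^ k - 1)) (D (2 ^ k - 1)) φ₁ :=
          congrArg (walkW (2 * 2 ^ k) s D ψ) hsucc
        rw [hφ₂, e, hmid]
      have hv : (fun d => φ₁ (d, z₀)) ≠ 0 := by
        intro h
        exact hp₀ (by simpa using congrFun h d₀)
      obtain ⟨r₁, hr₁⟩ := rows_ne_zero (D (2 ^ k - 1)) (hD _) _ hv
      have hpt : φ₂ (r₁, z₀ + (if r₁ = 0 then 1 else -1)) ≠ 0 := by
        rw [hφ₂step]
        simp only [stepW]
        by_cases h0 : r₁ = 0 <;> simpa [h0, add_sub_cancel_right] using hr₁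
      -- the new position lies in coset r
      have hcoset : ∃ y' : ZMod (2 ^ k),
          liftC (2 ^ k) r y' = z₀ + (if r₁ = 0 then 1 else -1) := by
        have hr01 : r = 0 ∨ r = 1 := by omega
        rcases hr01 with hr0 | hr0 <;> subst hr0
        · -- r = 0, c₀ = 1
          have hc1 : c₀ = 1 := by omega
          by_cases h0 : r₁ = 0
          · refine ⟨w₀ + 1, ?_⟩
            rw [if_pos h0, ← hz₀, hc1]
            exact (lift_succ1 w₀).symm
          · refine ⟨w₀, ?_⟩
            rw [if_neg h0, ← hz₀, hc1, ← sub_eq_add_neg]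
            exact (lift_pred1 w₀).symm
        · -- r = 1, c₀ = 0
          have hc1 : c₀ = 0 := by omega
          by_cases h0 : r₁ = 0
          · refine ⟨w₀, ?_⟩
            rw [if_pos h0, ← hz₀, hc1]
            exact (lift_succ0 w₀).symm
          · refine ⟨w₀ - 1, ?_⟩
            rw [if_neg h0, ← hz₀, hc1, ← sub_eq_add_neg]
            exact (lift_pred0 w₀).symm
      obtain ⟨y', hy'⟩ := hcoset
      have hproj₂ : projC (2 ^ k) r φ₂ ≠ 0 := by
        intro h
        apply hpt
        rw [← hy']
        exact congrFun h (r₁, y')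
      -- second half
      have hssecond : ∀ i, i < 2 ^ k - 1 →
          s (2 ^ k + i) = ((2 * ((magSeq k k).getD i 0) : ℕ) : ZMod (2 * 2 ^ k)) := by
        intro i hi
        rw [hs (2 ^ k + i) (by omega), listSecond k i hi]
      obtain ⟨t, ht, d, hd⟩ := halfCover k IH (fun i => s (2 ^ k + i)) hssecond
        (fun i => D (2 ^ k + i)) (fun t => hD _) φ₂ r hproj₂ y
      refine ⟨2 ^ k + t, by omega, d, ?_⟩
      rw [walkW_shift _ s D ψ (2 ^ k) t, ← hφ₂, ← hx]
      exact hd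

/-- If Magnus plays the classical optimal doubling sequence `s_k` on `n = 2^k`
nodes and Derek plays arbitrary `SU(2)` unitaries on his direction register,
then every position `x` is attained: at some step `t ≤ n - 1` some
computational-basis component with position `x` has nonzero amplitude. -/
theorem stmt_9 (k n : ℕ) (hk : 1 ≤ k) (hn : n = 2 ^ k)
    (D : ℕ → Matrix (Fin 2) (Fin 2) ℂ)
    (hD : ∀ t, D t ∈ Matrix.unitaryGroup (Fin 2) ℂ ∧ (D t).det = 1) :
    ∀ x : ZMod n, ∃ t ≤ n - 1, ∃ d : Fin 2,
      derekWalk n (fun i => (((magSeq k k).getD i 0 : ℕ) : ZMod n)) D t (d, x) ≠ 0 := by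
  intro x
  have hψ : (fun p : Fin 2 × ZMod n => if p = (0, 0) then (1:ℂ) else 0) ≠ 0 := by
    intro h
    have := congrFun h (0, 0)
    simp at this
  obtain ⟨t, ht, d, hd⟩ := coverAll k n hn _ (fun i _ => rfl) D (fun t => (hD t).1) _ hψ x
  refine ⟨t, ht, d, ?_⟩
  rw [derekWalk_eq]
  exact hd
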